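/- For n ≥ 1 and m ≥ 2, let s_j denote the residue of j in [n] (i.e., s_j = j − n·⌊(j−1)/n⌋). The point y ∈ ℝ^(n^m) with y = 1/n at each position (s_j, s_{j+1}, ..., s_{j+m-1}) for j = 1, ..., n, and 0 elsewhere, lies in the H-cycle polytope H_{n,m}. -/

import Mathlib

/-- `sres n hn j` is the residue of `j` modulo `n`, as an element of `Fin n`. -/
def sres (n : ℕ) (hn : 0 < n) (j : ℕ) : Fin n := ⟨j % n, Nat.mod_lt j hn⟩

open Fin.NatCast in
lemma key_sum (n : ℕ) (hn : 0 < n) (c : ℕ) (f : Fin n → (Fin n → ℝ)) :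
    ∑ j ∈ Finset.range n, f (sres n hn (j + c)) = ∑ i : Fin n, f i := by
  haveI : NeZero n := ⟨hn.ne'⟩
  have hs : ∀ k : ℕ, sres n hn k = (k : Fin n) := by
    intro k; ext; simp [sres, Fin.val_natCast]
  have h1 : ∀ j : ℕ, f (sres n hn (j + c)) = f ((j : Fin n) + (c : Fin n)) := by
    intro j; rw [hs, Nat.cast_add]
  calc ∑ j ∈ Finset.range n, f (sres n hn (j + c))
      = ∑ j ∈ Finset.range n, f ((j : Fin n) + (c : Fin n)) := by
        exact Finset.sum_congr rfl fun j _ => h1 j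
    _ = ∑ i : Fin n, f ((i : Fin n) + (c : Fin n)) := by
        rw [← Fin.sum_univ_eq_sum_range (fun j => f ((j : Fin n) + (c : Fin n))) n]
        exact Finset.sum_congr rfl fun i _ => by rw [Fin.cast_val_eq_self]
    _ = ∑ i : Fin n, f i := Fintype.sum_equiv (Equiv.addRight (c : Fin n)) _ _ (fun i => rfl)

open Classical in
/-- The point with mass 1/n on each of the n cyclically shifted windows
`(s_j, s_{j+1}, …, s_{j+m-1})`, `j = 0,…,n-1`, lies in the H-cycle polytope H_{n,m}.
A point of ℝ^{n^m} is a function on m-tuples `u : Fin m → Fin n`. -/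
theorem stmt_10 (n m : ℕ) (hn : 0 < n) (hm : 2 ≤ m)
    (y : (Fin m → Fin n) → ℝ)
    (hy : ∀ u : Fin m → Fin n,
      y u = if ∃ j < n, u = fun l : Fin m => sres n hn (j + (l : ℕ)) then (1 : ℝ) / n else 0) :
    (∀ u, 0 ≤ y u) ∧
    (∑ u : Fin m → Fin n, y u) = 1 ∧
    (∑ u : Fin m → Fin n, y u •
        (((m - 1 : ℕ) : ℝ) • (Pi.single (u ⟨0, by omega⟩) (1 : ℝ) : Fin n → ℝ) -
          ∑ l ∈ Finset.univ.erase (⟨0, by omega⟩ : Fin m),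
            (Pi.single (u l) (1 : ℝ) : Fin n → ℝ))) = (0 : Fin n → ℝ) := by
  set z0 : Fin m := ⟨0, by omega⟩ with hz0
  set w : ℕ → (Fin m → Fin n) := fun j l => sres n hn (j + (l : ℕ)) with hw
  set S : Finset (Fin m → Fin n) := (Finset.range n).image w with hS
  have hinj : Set.InjOn w (Finset.range n) := by
    intro j hj k hk h
    simp only [Finset.coe_range, Set.mem_Iio] at hj hk
    have := congrFun h z0
    simp only [hw, hz0, sres] at this
    have := congrArg Fin.val this
    simpa [Nat.mod_eq_of_lt hj, Nat.mod_eq_of_lt hk] using this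
  have hyS : ∀ u, y u = if u ∈ S then (1 : ℝ) / n else 0 := by
    intro u
    rw [hy u]
    congr 1
    simp only [hS, Finset.mem_image, Finset.mem_range, eq_iff_iff]
    constructor
    · rintro ⟨j, hj, rfl⟩; exact ⟨j, hj, rfl⟩
    · rintro ⟨j, hj, rfl⟩; exact ⟨j, hj, rfl⟩
  have hcard : S.card = n := by
    rw [hS, Finset.card_image_of_injOn hinj, Finset.card_range]
  have hn' : (n : ℝ) ≠ 0 := Nat.cast_ne_zero.mpr hn.ne'
  refine ⟨?_, ?_, ?_⟩
  · intro u
    rw [hyS u]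
    split_ifs
    · positivity
    · rfl
  · calc ∑ u : Fin m → Fin n, y u
        = ∑ u ∈ S, (1 : ℝ) / n := by
          rw [Finset.sum_congr rfl fun u _ => hyS u]
          rw [Finset.sum_ite_mem, Finset.univ_inter]
      _ = 1 := by rw [Finset.sum_const, hcard, nsmul_eq_mul]; field_simp
  · set v : (Fin m → Fin n) → (Fin n → ℝ) := fun u =>
      ((m - 1 : ℕ) : ℝ) • (Pi.single (u z0) (1 : ℝ) : Fin n → ℝ) -
        ∑ l ∈ Finset.univ.erase z0, (Pi.single (u l) (1 : ℝ) : Fin n → ℝ) with hv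
    have step1 : ∑ u : Fin m → Fin n, y u • v u = ((1:ℝ)/n) • ∑ j ∈ Finset.range n, v (w j) := by
      calc ∑ u : Fin m → Fin n, y u • v u
          = ∑ u ∈ S, ((1:ℝ)/n) • v u := by
            rw [Finset.sum_congr rfl fun u _ => by rw [hyS u, ite_smul, zero_smul]]
            rw [Finset.sum_ite_mem, Finset.univ_inter]
        _ = ((1:ℝ)/n) • ∑ u ∈ S, v u := by rw [Finset.smul_sum]
        _ = ((1:ℝ)/n) • ∑ j ∈ Finset.range n, v (w j) := by
            rw [hS, Finset.sum_image (fun a ha b hb h => hinj ha hb h)]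
    have hone : ∀ c : ℕ, ∑ j ∈ Finset.range n,
        (Pi.single (sres n hn (j + c)) (1 : ℝ) : Fin n → ℝ) = fun _ => 1 := by
      intro c
      rw [key_sum n hn c (fun i => Pi.single i (1:ℝ))]
      exact Finset.univ_sum_single (fun _ => (1:ℝ))
    have step2 : ∑ j ∈ Finset.range n, v (w j) = 0 := by
      simp only [hv, hw]
      rw [Finset.sum_sub_distrib, ← Finset.smul_sum]
      rw [hone (z0 : ℕ)]
      rw [Finset.sum_comm]
      simp only [hone]
      rw [Finset.sum_const, Finset.card_erase_of_mem (Finset.mem_univ z0), Finset.card_univ,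
        Fintype.card_fin]
      ext i
      simp
    rw [step1, step2, smul_zero]
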